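/- For every γ ≥ 0, the optimal value of the dual program satisfies D*(γ) = μ·γ + λ·(c^f(r) − V(γ, r)). -/
import Mathlib


open scoped Classical
open Finset

/-- A finite tree-structured Markov chain: a finite state space partitioned into
levels `0, …, L-1`, a root `r` at level `0`, a parent map `pa` (with `pa r = r` by
convention), and transition probabilities `p i ∈ (0,1]` of being reached from the
parent, with `p r = 1`. -/
structure TreeMC (S : Type*) [Fintype S] [DecidableEq S] where
  /-- the number of levels -/
  L : ℕ
  /-- the root -/
  r : S
  /-- the parent map (with `pa r = r` by convention) -/
  pa : S → S
  /-- the level of each state -/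
  level : S → ℕ
  /-- the probability of being reached from the parent -/
  p : S → ℝ
  level_lt : ∀ i, level i < L
  level_r : level r = 0
  root_unique : ∀ i, level i = 0 → i = r
  pa_r : pa r = r
  level_pa : ∀ i, i ≠ r → level (pa i) + 1 = level i
  p_pos : ∀ i, 0 < p i
  p_le_one : ∀ i, p i ≤ 1
  p_r : p r = 1

namespace TreeMC

variable {S : Type*} [Fintype S] [DecidableEq S] (M : TreeMC S)

/-- The ancestors of `i`: states on the path from the root to `i` (both included). -/
noncomputable def anc (i : S) : Finset S :=
  Finset.univ.filter fun a => ∃ n : ℕ, M.pa^[n] i = a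

/-- The subtree of `i`: all states having `i` as an ancestor. -/
noncomputable def subt (i : S) : Finset S :=
  Finset.univ.filter fun k => i ∈ M.anc k

/-- The subtree of a set of states. -/
noncomputable def subF (X : Finset S) : Finset S :=
  Finset.univ.filter fun k => ∃ i ∈ X, k ∈ M.subt i

/-- `π i`: the probability that a job passes through state `i`. -/
noncomputable def pi (i : S) : ℝ :=
  ∏ a ∈ M.anc i, M.p a

/-- The children of `i`. -/
noncomputable def child (i : S) : Finset S :=
  Finset.univ.filter fun k => k ≠ M.r ∧ M.pa k = i

/-- `T` is the top set of `X`: a subset of `X` whose subtree covers `X` and in which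
no state lies in the subtree of a different state. -/
def IsTopSet (X T : Finset S) : Prop :=
  T ⊆ X ∧ X ⊆ M.subF T ∧ ∀ i ∈ T, ∀ k ∈ T, i ≠ k → k ∉ M.subt i

/-- Expected future cost conditional on being in state `a`. -/
noncomputable def cf (c : S → ℝ) (a : S) : ℝ :=
  ∑ i ∈ M.subt a, c i * M.pi i / M.pi a

/-- `V` is the ski-rental value function:
`V γ i = min (γ, c i + Σ_{k ∈ child i} p k · V γ k)`. -/
def IsSkiValue (c : S → ℝ) (V : ℝ → S → ℝ) : Prop :=
  ∀ γ : ℝ, ∀ i : S, V γ i = min γ (c i + ∑ k ∈ M.child i, M.p k * V γ k)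

/-- Expected future cost-to-go `V^f`. -/
noncomputable def Vf (V : ℝ → S → ℝ) (γ : ℝ) (i : S) : ℝ :=
  ∑ k ∈ M.child i, M.p k * V γ k

/-- The candidate optimal state duals `β*(γ)`. -/
noncomputable def betaStar (c : S → ℝ) (V : ℝ → S → ℝ) (γ : ℝ) (i : S) : ℝ :=
  max 0 (c i + M.Vf V γ i - γ)

/-- Feasibility for the dual program `D*(γ)`. -/
def DualFeasible (c : S → ℝ) (γ : ℝ) (β : S → ℝ) : Prop :=
  (∀ i, 0 ≤ β i) ∧ ∀ a, M.cf c a ≤ γ + ∑ i ∈ M.subt a, β i * M.pi i / M.pi a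

/-- Feasibility for the fluid LP (OriginalFluid). -/
def OrigFeasible (lam mu : ℝ) (q ν : S → ℝ) : Prop :=
  (∀ i, 0 ≤ q i) ∧ (∀ i, 0 ≤ ν i) ∧ q M.r = lam ∧
    (∀ i, i ≠ M.r → q i = (q (M.pa i) - ν (M.pa i)) * M.p i) ∧
    (∀ i, ν i ≤ q i) ∧ ∑ i : S, ν i ≤ mu

/-- Feasibility for the fluid LP (SimplerFluid). -/
def SimpFeasible (lam mu : ℝ) (ν : S → ℝ) : Prop :=
  (∀ i, 0 ≤ ν i) ∧ (∀ i, ∑ a ∈ M.anc i, ν a * M.pi i / M.pi a ≤ lam * M.pi i) ∧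
    ∑ i : S, ν i ≤ mu

end TreeMC

namespace TreeMC

variable {S : Type*} [Fintype S] [DecidableEq S] (M : TreeMC S)

lemma level_pa_le (i : S) : M.level (M.pa i) ≤ M.level i := by
  by_cases h : i = M.r
  · subst h; rw [M.pa_r]
  · have := M.level_pa i h; omega

lemma level_iter_le (n : ℕ) (i : S) : M.level (M.pa^[n] i) ≤ M.level i := by
  induction n with
  | zero => simp
  | succ n ih =>
    rw [Function.iterate_succ_apply']
    exact (M.level_pa_le _).trans ih

lemma level_iter (n : ℕ) (i : S) (h : n ≤ M.level i) :
    M.level (M.pa^[n] i) = M.level i - n := by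
  induction n with
  | zero => simp
  | succ n ih =>
    rw [Function.iterate_succ_apply']
    have h1 : M.level (M.pa^[n] i) = M.level i - n := ih (by omega)
    have h2 : M.pa^[n] i ≠ M.r := by
      intro he
      rw [he, M.level_r] at h1; omega
    have := M.level_pa _ h2
    omega

lemma iter_root (n : ℕ) (i : S) (h : M.level i ≤ n) : M.pa^[n] i = M.r := by
  have h1 : M.pa^[M.level i] i = M.r := by
    apply M.root_unique
    have := M.level_iter (M.level i) i le_rfl; omega
  obtain ⟨m, rfl⟩ := Nat.exists_eq_add_of_le h
  rw [add_comm, Function.iterate_add_apply, h1]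
  clear h h1
  induction m with
  | zero => rfl
  | succ m ih => rw [Function.iterate_succ_apply', ih, M.pa_r]

lemma mem_anc_iff {a i : S} : a ∈ M.anc i ↔ ∃ n, M.pa^[n] i = a := by
  simp [anc]

lemma self_mem_anc (i : S) : i ∈ M.anc i := M.mem_anc_iff.2 ⟨0, rfl⟩

lemma root_mem_anc (i : S) : M.r ∈ M.anc i :=
  M.mem_anc_iff.2 ⟨M.level i, M.iter_root _ _ le_rfl⟩

lemma level_le_of_mem_anc {a i : S} (h : a ∈ M.anc i) : M.level a ≤ M.level i := by
  obtain ⟨n, rfl⟩ := M.mem_anc_iff.1 h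
  exact M.level_iter_le n i

lemma eq_of_mem_anc_level {a i : S} (h : a ∈ M.anc i) (hl : M.level i ≤ M.level a) :
    a = i := by
  obtain ⟨n, rfl⟩ := M.mem_anc_iff.1 h
  match n with
  | 0 => rfl
  | n + 1 =>
    by_cases hi : i = M.r
    · subst hi
      rw [M.iter_root _ _ (by rw [M.level_r]; omega)]
    · exfalso
      have h1 : M.level (M.pa^[n+1] i) ≤ M.level (M.pa i) := by
        rw [Function.iterate_succ_apply]; exact M.level_iter_le n _
      have := M.level_pa i hi
      omega

lemma anc_eq_insert {k : S} (hk : k ≠ M.r) :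
    M.anc k = insert k (M.anc (M.pa k)) := by
  ext a
  simp only [M.mem_anc_iff, Finset.mem_insert]
  constructor
  · rintro ⟨n, rfl⟩
    match n with
    | 0 => exact Or.inl rfl
    | n + 1 => exact Or.inr ⟨n, by rw [Function.iterate_succ_apply]⟩
  · rintro (rfl | ⟨n, rfl⟩)
    · exact ⟨0, rfl⟩
    · exact ⟨n + 1, by rw [Function.iterate_succ_apply]⟩

lemma not_mem_anc_pa {k : S} (hk : k ≠ M.r) : k ∉ M.anc (M.pa k) := by
  intro h
  have h1 := M.level_le_of_mem_anc h
  have := M.level_pa k hk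
  omega

lemma pi_pos (i : S) : 0 < M.pi i := Finset.prod_pos fun a _ => M.p_pos a

lemma anc_root : M.anc M.r = {M.r} := by
  ext a
  simp only [M.mem_anc_iff, Finset.mem_singleton]
  constructor
  · rintro ⟨n, rfl⟩
    induction n with
    | zero => rfl
    | succ n ih => rw [Function.iterate_succ_apply', ih, M.pa_r]
  · rintro rfl; exact ⟨0, rfl⟩

lemma pi_root : M.pi M.r = 1 := by
  rw [pi, M.anc_root, Finset.prod_singleton, M.p_r]

lemma pi_eq {k : S} (hk : k ≠ M.r) : M.pi k = M.p k * M.pi (M.pa k) := by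
  rw [pi, M.anc_eq_insert hk, Finset.prod_insert (M.not_mem_anc_pa hk)]; rfl

lemma mem_subt_iff {i a : S} : i ∈ M.subt a ↔ a ∈ M.anc i := by
  simp [subt]

lemma self_mem_subt (a : S) : a ∈ M.subt a := M.mem_subt_iff.2 (M.self_mem_anc a)

lemma mem_child_iff {k a : S} : k ∈ M.child a ↔ k ≠ M.r ∧ M.pa k = a := by
  simp [child]

lemma level_child {k a : S} (h : k ∈ M.child a) : M.level k = M.level a + 1 := by
  obtain ⟨h1, h2⟩ := M.mem_child_iff.1 h
  rw [← h2, ← M.level_pa k h1]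

lemma level_le_of_mem_subt {i a : S} (h : i ∈ M.subt a) : M.level a ≤ M.level i :=
  M.level_le_of_mem_anc (M.mem_subt_iff.1 h)

-- The iterate hitting a state of positive level is unique
lemma iter_unique {i a : S} {n m : ℕ} (hn : M.pa^[n] i = a) (hm : M.pa^[m] i = a)
    (ha : 0 < M.level a) : n = m := by
  have h1 : n ≤ M.level i := by
    by_contra h
    rw [M.iter_root n i (by omega)] at hn
    rw [← hn, M.level_r] at ha; omega
  have h2 : m ≤ M.level i := by
    by_contra h
    rw [M.iter_root m i (by omega)] at hm
    rw [← hm, M.level_r] at ha; omega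
  have e1 := M.level_iter n i h1
  have e2 := M.level_iter m i h2
  rw [hn] at e1; rw [hm] at e2
  omega

lemma subt_decomp (a : S) :
    M.subt a = insert a ((M.child a).biUnion fun k => M.subt k) := by
  ext i
  simp only [Finset.mem_insert, Finset.mem_biUnion]
  constructor
  · intro hi
    by_cases hia : i = a
    · exact Or.inl hia
    · right
      have hex : ∃ n, M.pa^[n] i = a := M.mem_anc_iff.1 (M.mem_subt_iff.1 hi)
      set n := Nat.find hex with hn
      have hfind : M.pa^[n] i = a := Nat.find_spec hex
      have hn0 : n ≠ 0 := by
        intro h; rw [h] at hfind; exact hia hfind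
      obtain ⟨m, hm⟩ : ∃ m, n = m + 1 := ⟨n - 1, by omega⟩
      refine ⟨M.pa^[m] i, ?_, ?_⟩
      · rw [M.mem_child_iff]
        constructor
        · intro he
          have : M.pa^[m + 1] i = M.r := by
            rw [Function.iterate_succ_apply', he, M.pa_r]
          rw [← hm, hfind] at this
          -- a = r, but then pa^[m] i would also equal a... need contradiction
          -- a = r: then pa^[m] i = r = a, contradicting minimality
          have : M.pa^[m] i = a := by rw [he, this]
          exact absurd this (by
            have := Nat.find_min hex (m := m) (by omega)
            exact this)
        · have : M.pa (M.pa^[m] i) = M.pa^[m+1] i :=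
            (Function.iterate_succ_apply' M.pa m i).symm
          rw [this, ← hm, hfind]
      · exact M.mem_subt_iff.2 (M.mem_anc_iff.2 ⟨m, rfl⟩)
  · rintro (h | ⟨k, hk, hik⟩)
    · rw [h]; exact M.self_mem_subt a
    · obtain ⟨hk1, hk2⟩ := M.mem_child_iff.1 hk
      obtain ⟨n, rfl⟩ := M.mem_anc_iff.1 (M.mem_subt_iff.1 hik)
      refine M.mem_subt_iff.2 (M.mem_anc_iff.2 ⟨n + 1, ?_⟩)
      rw [Function.iterate_succ_apply', hk2]

lemma not_mem_biUnion_child (a : S) :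
    a ∉ (M.child a).biUnion fun k => M.subt k := by
  simp only [Finset.mem_biUnion, not_exists]
  intro k
  rintro ⟨hk, hik⟩
  exact absurd (M.level_le_of_mem_subt hik) (by rw [M.level_child hk]; omega)

lemma child_subt_disjoint {a : S} {k k' : S} (hk : k ∈ M.child a) (hk' : k' ∈ M.child a)
    (hne : k ≠ k') : Disjoint (M.subt k) (M.subt k') := by
  rw [Finset.disjoint_left]
  intro i hik hik'
  obtain ⟨n, hn⟩ := M.mem_anc_iff.1 (M.mem_subt_iff.1 hik)
  obtain ⟨m, hm⟩ := M.mem_anc_iff.1 (M.mem_subt_iff.1 hik')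
  have hlk : M.level k = M.level a + 1 := M.level_child hk
  have hlk' : M.level k' = M.level a + 1 := M.level_child hk'
  have h1 : n ≤ M.level i := by
    by_contra h
    rw [M.iter_root n i (by omega)] at hn
    rw [← hn, M.level_r] at hlk; omega
  have h2 : m ≤ M.level i := by
    by_contra h
    rw [M.iter_root m i (by omega)] at hm
    rw [← hm, M.level_r] at hlk'; omega
  have e1 := M.level_iter n i h1
  have e2 := M.level_iter m i h2
  rw [hn] at e1; rw [hm] at e2
  have : n = m := by omega
  exact hne (by rw [← hn, ← hm, this])

lemma sum_subt_decomp (f : S → ℝ) (a : S) :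
    ∑ i ∈ M.subt a, f i = f a + ∑ k ∈ M.child a, ∑ i ∈ M.subt k, f i := by
  rw [M.subt_decomp a, Finset.sum_insert (M.not_mem_biUnion_child a),
    Finset.sum_biUnion]
  intro k hk k' hk' hne
  exact M.child_subt_disjoint hk hk' hne

lemma pi_child {k a : S} (hk : k ∈ M.child a) : M.pi k = M.p k * M.pi a := by
  obtain ⟨h1, h2⟩ := M.mem_child_iff.1 hk
  rw [M.pi_eq h1, h2]

lemma sum_subt_div (g : S → ℝ) (a : S) :
    ∑ i ∈ M.subt a, g i * M.pi i / M.pi a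
      = g a + ∑ k ∈ M.child a, M.p k * ∑ i ∈ M.subt k, g i * M.pi i / M.pi k := by
  rw [M.sum_subt_decomp (fun i => g i * M.pi i / M.pi a) a]
  congr 1
  · rw [mul_div_assoc, div_self (M.pi_pos a).ne', mul_one]
  · apply Finset.sum_congr rfl
    intro k hk
    rw [Finset.mul_sum]
    apply Finset.sum_congr rfl
    intro i _
    have hpk := M.pi_child hk
    have h1 : M.pi a ≠ 0 := (M.pi_pos a).ne'
    have h2 : M.pi k ≠ 0 := (M.pi_pos k).ne'
    have h3 : M.p k ≠ 0 := (M.p_pos k).ne'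
    field_simp
    rw [hpk]; ring

lemma cf_rec (c : S → ℝ) (a : S) :
    M.cf c a = c a + ∑ k ∈ M.child a, M.p k * M.cf c k := by
  rw [cf, M.sum_subt_div c a]
  rfl

lemma subt_root : M.subt M.r = Finset.univ := by
  ext i
  simp only [Finset.mem_univ, iff_true]
  exact M.mem_subt_iff.2 (M.root_mem_anc i)

/-- The depth measure decreases from parent to child. -/
lemma depth_child {k a : S} (hk : k ∈ M.child a) :
    M.L - M.level k < M.L - M.level a := by
  have := M.level_child hk
  have := M.level_lt a
  omega

end TreeMC

private lemma max_min_aux (γ x : ℝ) : max 0 (x - γ) = x - min γ x := by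
  rcases le_total γ x with h | h
  · rw [max_eq_right (by linarith), min_eq_left h]
  · rw [max_eq_left (by linarith), min_eq_right h]; ring

namespace TreeMC

variable {S : Type*} [Fintype S] [DecidableEq S] (M : TreeMC S)

lemma betaStar_sum (c : S → ℝ) (V : ℝ → S → ℝ) (hV : M.IsSkiValue c V) (γ : ℝ)
    (n : ℕ) : ∀ a, M.L - M.level a ≤ n →
    ∑ i ∈ M.subt a, M.betaStar c V γ i * M.pi i / M.pi a = M.cf c a - V γ a := by
  induction n with
  | zero => intro a ha; exact absurd ha (by have := M.level_lt a; omega)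
  | succ n ih =>
    intro a _ha
    rw [M.sum_subt_div]
    have h1 : ∀ k ∈ M.child a,
        M.p k * ∑ i ∈ M.subt k, M.betaStar c V γ i * M.pi i / M.pi k
          = M.p k * (M.cf c k - V γ k) := fun k hk => by
      rw [ih k (by have := M.depth_child hk; omega)]
    rw [Finset.sum_congr rfl h1]
    have h2 : ∑ k ∈ M.child a, M.p k * (M.cf c k - V γ k)
        = ∑ k ∈ M.child a, M.p k * M.cf c k - ∑ k ∈ M.child a, M.p k * V γ k := by
      simp only [mul_sub]; rw [Finset.sum_sub_distrib]
    have hrec := M.cf_rec c a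
    have hvf : M.Vf V γ a = ∑ k ∈ M.child a, M.p k * V γ k := rfl
    rw [h2, betaStar, hvf, max_min_aux, hV γ a]
    linarith
  
lemma dual_lb (c : S → ℝ) (V : ℝ → S → ℝ) (hV : M.IsSkiValue c V) (γ : ℝ)
    (β : S → ℝ) (hβ : M.DualFeasible c γ β) (n : ℕ) :
    ∀ a, M.L - M.level a ≤ n →
    M.cf c a - V γ a ≤ ∑ i ∈ M.subt a, β i * M.pi i / M.pi a := by
  induction n with
  | zero => intro a ha; exact absurd ha (by have := M.level_lt a; omega)
  | succ n ih =>
    intro a _ha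
    have hVa := hV γ a
    have hb1 : M.cf c a - γ ≤ ∑ i ∈ M.subt a, β i * M.pi i / M.pi a := by
      have := hβ.2 a; linarith
    have hb2 : M.cf c a - (c a + ∑ k ∈ M.child a, M.p k * V γ k)
        ≤ ∑ i ∈ M.subt a, β i * M.pi i / M.pi a := by
      rw [M.sum_subt_div]
      have h1 : ∀ k ∈ M.child a, M.p k * (M.cf c k - V γ k)
          ≤ M.p k * ∑ i ∈ M.subt k, β i * M.pi i / M.pi k := fun k hk =>
        mul_le_mul_of_nonneg_left
          (ih k (by have := M.depth_child hk; omega)) (M.p_pos k).le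
      have h2 := Finset.sum_le_sum h1
      have h3 : ∑ k ∈ M.child a, M.p k * (M.cf c k - V γ k)
          = ∑ k ∈ M.child a, M.p k * M.cf c k
            - ∑ k ∈ M.child a, M.p k * V γ k := by
        simp only [mul_sub]; rw [Finset.sum_sub_distrib]
      have hrec := M.cf_rec c a
      have hba := hβ.1 a
      linarith
    rcases le_total γ (c a + ∑ k ∈ M.child a, M.p k * V γ k) with h | h
    · rw [hVa, min_eq_left h]; exact hb1
    · rw [hVa, min_eq_right h]; exact hb2

lemma depth_le (a : S) : M.L - M.level a ≤ M.L := by omega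

end TreeMC

/-- For every `γ ≥ 0`, the optimal value of the dual program satisfies
`D*(γ) = μ·γ + λ·(c^f(r) − V(γ, r))`. -/
theorem dual_value_eq {S : Type*} [Fintype S] [DecidableEq S]
    (M : TreeMC S) (c : S → ℝ) (hc : ∀ i, 0 < c i)
    (V : ℝ → S → ℝ) (hV : M.IsSkiValue c V)
    (lam mu : ℝ) (hlam0 : 0 < lam) (hlam1 : lam < 1) (hmu0 : 0 < mu) (hmu1 : mu ≤ 1)
    (γ : ℝ) (hγ : 0 ≤ γ) :
    IsLeast
      {v : ℝ | ∃ β : S → ℝ, M.DualFeasible c γ β ∧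
        v = lam * ∑ i : S, M.pi i * β i + mu * γ}
      (mu * γ + lam * (M.cf c M.r - V γ M.r)) := by
  constructor
  · refine ⟨M.betaStar c V γ, ⟨fun i => le_max_left 0 _, ?_⟩, ?_⟩
    · intro a
      have hsum := M.betaStar_sum c V hV γ M.L a (M.depth_le a)
      have hle : V γ a ≤ γ := by rw [hV γ a]; exact min_le_left _ _
      linarith
    · have hroot := M.betaStar_sum c V hV γ M.L M.r (M.depth_le M.r)
      have heq : ∑ i : S, M.pi i * M.betaStar c V γ i
          = ∑ i ∈ M.subt M.r, M.betaStar c V γ i * M.pi i / M.pi M.r := by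
        rw [M.subt_root, M.pi_root]
        simp [mul_comm]
      rw [heq, hroot]; ring
  · rintro v ⟨β, hβ, rfl⟩
    have hlb := M.dual_lb c V hV γ β hβ M.L M.r (M.depth_le M.r)
    have hsum : ∑ i ∈ M.subt M.r, β i * M.pi i / M.pi M.r
        = ∑ i : S, M.pi i * β i := by
      rw [M.subt_root, M.pi_root]
      simp [mul_comm]
    rw [hsum] at hlb
    have := mul_le_mul_of_nonneg_left hlb hlam0.le
    linarith
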